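/- Let M ⊆ 𝔽₂ⁿ \ {0} be a finite Eulerian set that can be partitioned into t linearly independent subsets. Then M has a circuit odd-cover using at most (4/3)·t circuits; i.e., c₂(M) ≤ (4/3)·a(M), where a(M) is the minimum number of linearly independent sets needed to partition M. -/

import Mathlib

open Finset

/-- A circuit: a minimal nonempty subset of the ambient group minus `{0}` with zero sum. -/
def IsCircuit {V : Type*} [AddCommGroup V] [DecidableEq V] (C : Finset V) : Prop :=
  C.Nonempty ∧ (0 : V) ∉ C ∧ ∑ x ∈ C, x = 0 ∧
    ∀ D ⊆ C, D.Nonempty → ∑ x ∈ D, x = 0 → D = C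
/-- `C 0 ⊕ ⋯ ⊕ C (t-1) = M`: each element of `M` is covered an odd number of
times and each element outside `M` an even number of times, and all `C i` are circuits. -/
def IsOddCover {V : Type*} [AddCommGroup V] [DecidableEq V]
    (M : Finset V) {t : ℕ} (C : Fin t → Finset V) : Prop :=
  (∀ i, IsCircuit (C i)) ∧
  ∀ x : V, x ∈ M ↔ Odd ((Finset.univ.filter fun i => x ∈ C i).card)

/-- minimum number of circuits in a circuit odd-cover of `M`. -/
noncomputable def oddCoverNum {V : Type*} [AddCommGroup V] [DecidableEq V]
    (M : Finset V) : ℕ :=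
  sInf {t : ℕ | ∃ C : Fin t → Finset V, IsOddCover M C}

open scoped symmDiff

section Helpers
variable {n : ℕ}


lemma vadd_self (v : Fin n → ZMod 2) : v + v = 0 := by
  funext i; exact CharTwo.add_self_eq_zero _

lemma indep_no_zero_sum (Ifin : Finset (Fin n → ZMod 2))
    (hind : LinearIndependent (ZMod 2) (fun x : Ifin => (x : Fin n → ZMod 2)))
    (D : Finset (Fin n → ZMod 2)) (hD : D ⊆ Ifin) (hsum : ∑ x ∈ D, x = 0) : D = ∅ := by
  classical
  rw [Fintype.linearIndependent_iff] at hind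
  by_contra h
  obtain ⟨d, hd⟩ := Finset.nonempty_of_ne_empty h
  have key : ∑ i : Ifin, (if (i : Fin n → ZMod 2) ∈ D then (1 : ZMod 2) else 0) • (i : Fin n → ZMod 2) = 0 := by
    have h1 : ∑ i : Ifin, (if (i : Fin n → ZMod 2) ∈ D then (1 : ZMod 2) else 0) • (i : Fin n → ZMod 2)
        = ∑ x ∈ Ifin, (if x ∈ D then x else 0) := by
      rw [← Finset.sum_coe_sort Ifin (fun x => if x ∈ D then x else 0)]
      congr 1; funext i
      split <;> simp
    rw [h1, Finset.sum_ite_mem, Finset.inter_eq_right.mpr hD, hsum]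
  have := hind _ key ⟨d, hD hd⟩
  simp [hd] at this

lemma circuit_of_indep (Ifin : Finset (Fin n → ZMod 2)) (h0 : (0 : Fin n → ZMod 2) ∉ Ifin)
    (hind : LinearIndependent (ZMod 2) (fun x : Ifin => (x : Fin n → ZMod 2)))
    (h2 : 2 ≤ Ifin.card) :
    IsCircuit (insert (∑ x ∈ Ifin, x) Ifin) ∧
      ∑ x ∈ insert (∑ x ∈ Ifin, x) Ifin, x = 0 := by
  classical
  set σ := ∑ x ∈ Ifin, x with hσ
  have hσ0 : σ ≠ 0 := by
    intro h
    have he := indep_no_zero_sum Ifin hind Ifin Finset.Subset.rfl (hσ.symm.trans h)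
    rw [he] at h2; simp at h2
  have hσni : σ ∉ Ifin := by
    intro hmem
    have hs : ∑ x ∈ Ifin.erase σ, x = 0 := by
      have h1 := Finset.add_sum_erase Ifin (fun x => x) hmem
      linear_combination h1 - hσ
    have he := indep_no_zero_sum Ifin hind _ (Finset.erase_subset _ _) hs
    have : Ifin.card ≤ 1 := by
      have := Finset.card_erase_of_mem hmem
      rw [he] at this; simp at this; omega
    omega
  have hsum : ∑ x ∈ insert σ Ifin, x = 0 := by
    rw [Finset.sum_insert hσni, ← hσ]
    exact vadd_self σ
  refine ⟨⟨Finset.insert_nonempty _ _, ?_, hsum, ?_⟩, hsum⟩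
  · simp only [Finset.mem_insert, not_or]
    exact ⟨fun h => hσ0 h.symm, h0⟩
  · intro Ds hDs hDne hDsum
    by_cases hσD : σ ∈ Ds
    · have hD' : Ds.erase σ ⊆ Ifin := by
        intro y hy
        have hy2 := hDs (Finset.erase_subset _ _ hy)
        rcases Finset.mem_insert.mp hy2 with rfl | h
        · exact absurd rfl (Finset.ne_of_mem_erase hy)
        · exact h
      have hsum' : ∑ x ∈ Ds.erase σ, x = σ := by
        have h1 := Finset.add_sum_erase Ds (fun x => x) hσD
        have h2 := vadd_self σ
        linear_combination hDsum + h1 - h2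
      have hzero : ∑ x ∈ Ifin \ Ds.erase σ, x = 0 := by
        have h1 := Finset.sum_sdiff (f := fun x => x) hD'
        linear_combination h1 - hsum' - hσ
      have hempty := indep_no_zero_sum Ifin hind _ (Finset.sdiff_subset) hzero
      have hsub : Ifin ⊆ Ds.erase σ := by
        rwa [Finset.sdiff_eq_empty_iff_subset] at hempty
      apply Finset.Subset.antisymm hDs
      intro y hy
      rcases Finset.mem_insert.mp hy with rfl | h
      · exact hσD
      · exact Finset.erase_subset _ _ (hsub h)
    · have hsub : Ds ⊆ Ifin := by
        intro y hy
        rcases Finset.mem_insert.mp (hDs hy) with rfl | h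
        · exact absurd hy hσD
        · exact h
      have := indep_no_zero_sum Ifin hind Ds hsub hDsum
      rw [this] at hDne
      exact absurd hDne (by simp)

lemma sum_symmDiff_eq (s u : Finset (Fin n → ZMod 2)) :
    ∑ x ∈ s ∆ u, x = (∑ x ∈ s, x) + ∑ x ∈ u, x := by
  have h2 : Disjoint (s ∆ u) (s ∩ u) := disjoint_symmDiff_inf s u
  have h3 : (∑ x ∈ s ∆ u, x) + ∑ x ∈ s ∩ u, x = ∑ x ∈ s ∪ u, x := by
    rw [← Finset.sum_union h2]
    congr 1
    exact symmDiff_sup_inf s u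
  have h4 := Finset.sum_union_inter (s₁ := s) (s₂ := u) (f := fun x => x)
  have h5 := vadd_self (∑ x ∈ s ∩ u, x)
  linear_combination h3 + h4 - h5

instance instCommSD {α : Type*} [DecidableEq α] : Std.Commutative (α := Finset α) (· ∆ ·) :=
  ⟨fun a b => symmDiff_comm a b⟩
instance instAssocSD {α : Type*} [DecidableEq α] : Std.Associative (α := Finset α) (· ∆ ·) :=
  ⟨symmDiff_assoc⟩

lemma mem_fold_symmDiff {ι : Type*} [DecidableEq ι] (b : Finset (Fin n → ZMod 2))
    (g : ι → Finset (Fin n → ZMod 2)) (s : Finset ι) (x : Fin n → ZMod 2) :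
    x ∈ Finset.fold (β := Finset (Fin n → ZMod 2)) (· ∆ ·) b g s ↔
      ((x ∈ b) ↔ ¬ Odd ((s.filter fun i => x ∈ g i).card)) := by
  induction s using Finset.induction_on with
  | empty => simp
  | @insert a s ha ih =>
    rw [Finset.fold_insert ha, Finset.mem_symmDiff]
    have hcard : ((insert a s).filter fun i => x ∈ g i).card
        = (if x ∈ g a then 1 else 0) + ((s.filter fun i => x ∈ g i).card) := by
      rw [Finset.filter_insert]
      split
      · rw [Finset.card_insert_of_notMem (fun h => ha (Finset.mem_filter.mp h).1)]
        omega
      · omega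
    rw [hcard, ih]
    by_cases hxa : x ∈ g a
    · rw [if_pos hxa, add_comm, Nat.odd_add_one]
      tauto
    · rw [if_neg hxa, zero_add]
      tauto

lemma sum_fold_symmDiff {ι : Type*} [DecidableEq ι] (b : Finset (Fin n → ZMod 2))
    (g : ι → Finset (Fin n → ZMod 2)) (s : Finset ι) :
    ∑ x ∈ Finset.fold (β := Finset (Fin n → ZMod 2)) (· ∆ ·) b g s, x = (∑ x ∈ b, x) + ∑ i ∈ s, ∑ x ∈ g i, x := by
  induction s using Finset.induction_on with
  | empty => simp
  | @insert a s ha ih =>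
    rw [Finset.fold_insert ha, sum_symmDiff_eq, ih, Finset.sum_insert ha]
    abel

lemma circuit_card_ge (C : Finset (Fin n → ZMod 2)) (h : IsCircuit C) : 3 ≤ C.card := by
  obtain ⟨hne, h0, hsum, -⟩ := h
  have h1 : C.card ≠ 0 := by simp [Finset.card_eq_zero]; rintro rfl; exact hne.ne_empty rfl
  have h2 : C.card ≠ 1 := by
    intro hc
    obtain ⟨x, rfl⟩ := Finset.card_eq_one.mp hc
    simp at hsum
    exact h0 (by simp [hsum])
  have h3 : C.card ≠ 2 := by
    intro hc
    obtain ⟨x, y, hxy, rfl⟩ := Finset.card_eq_two.mp hc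
    rw [Finset.sum_pair hxy] at hsum
    apply hxy
    have := vadd_self x
    linear_combination this - hsum
  omega

lemma exists_circuit_subset (T : Finset (Fin n → ZMod 2)) :
    T.Nonempty → (0 : Fin n → ZMod 2) ∉ T → ∑ x ∈ T, x = 0 →
    ∃ C ⊆ T, IsCircuit C := by
  induction T using Finset.strongInduction with
  | _ T ih =>
    intro hT h0 hs
    by_cases hmin : ∀ D ⊆ T, D.Nonempty → ∑ x ∈ D, x = 0 → D = T
    · exact ⟨T, Finset.Subset.rfl, hT, h0, hs, hmin⟩
    · push_neg at hmin
      obtain ⟨D, hDT, hDne, hDsum, hDneq⟩ := hmin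
      obtain ⟨C, hCD, hC⟩ := ih D (HasSubset.Subset.ssubset_of_ne hDT hDneq) hDne
        (fun h => h0 (hDT h)) hDsum
      exact ⟨C, hCD.trans hDT, hC⟩

lemma exists_circuit_decomp (T : Finset (Fin n → ZMod 2)) :
    (0 : Fin n → ZMod 2) ∉ T → ∑ x ∈ T, x = 0 →
    ∃ (k : ℕ) (E : Fin k → Finset (Fin n → ZMod 2)),
      (∀ j, IsCircuit (E j)) ∧ 3 * k ≤ T.card ∧
      ∀ x, (Finset.univ.filter fun j => x ∈ E j).card = if x ∈ T then 1 else 0 := by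
  induction T using Finset.strongInduction with
  | _ T ih =>
    intro h0 hs
    rcases T.eq_empty_or_nonempty with rfl | hne
    · refine ⟨0, fun j => j.elim0, fun j => j.elim0, by simp, fun x => by simp⟩
    · obtain ⟨C, hCT, hC⟩ := exists_circuit_subset T hne h0 hs
      have hCne : C.Nonempty := hC.1
      have hss : T \ C ⊂ T := by
        apply Finset.sdiff_ssubset hCT hCne
      have hsum' : ∑ x ∈ T \ C, x = 0 := by
        have h1 := Finset.sum_sdiff (f := fun x => x) hCT
        have h2 := hC.2.2.1
        linear_combination h1 + hs - h2
      obtain ⟨k, E, hE, hcard, hcount⟩ := ih (T \ C) hss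
        (fun h => h0 (Finset.mem_sdiff.mp h).1) hsum'
      set E' : Fin (k+1) → Finset (Fin n → ZMod 2) := Fin.cons C E with hE'
      refine ⟨k + 1, E', ?_, ?_, ?_⟩
      · intro j
        refine Fin.cases ?_ ?_ j
        · simpa [hE'] using hC
        · intro i; simpa [hE'] using hE i
      · have h3 := circuit_card_ge C hC
        have h4 : (T \ C).card = T.card - C.card := Finset.card_sdiff_of_subset hCT
        have h5 : C.card ≤ T.card := Finset.card_le_card hCT
        omega
      · intro x
        have hcc : (Finset.univ.filter fun j : Fin (k+1) => x ∈ E' j).card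
            = (if x ∈ C then 1 else 0) + (Finset.univ.filter fun j : Fin k => x ∈ E j).card := by
          rw [Finset.card_filter, Finset.card_filter, Fin.sum_univ_succ]
          simp [hE', Fin.cons_zero, Fin.cons_succ]
        rw [hcc, hcount x]
        by_cases hxC : x ∈ C
        · simp [hxC, hCT hxC, Finset.mem_sdiff]
        · simp [hxC, Finset.mem_sdiff]

end Helpers

set_option maxHeartbeats 1000000 in
/-- If `M` can be partitioned into `t` linearly independent sets, then `M` has a
circuit odd-cover with at most `(4/3) t` circuits; i.e. `3 c₂(M) ≤ 4 t`. -/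
theorem oddCoverNum_le_four_thirds_arboricity {n : ℕ} (M : Finset (Fin n → ZMod 2))
    (hM : (0 : Fin n → ZMod 2) ∉ M) (heul : ∑ x ∈ M, x = 0)
    (t : ℕ) (I : Fin t → Finset (Fin n → ZMod 2))
    (hdisj : ∀ i j, i ≠ j → Disjoint (I i) (I j))
    (hunion : Finset.univ.biUnion I = M)
    (hindep : ∀ i, LinearIndependent (ZMod 2)
      (fun x : (I i) => (x : Fin n → ZMod 2))) :
    3 * oddCoverNum M ≤ 4 * t := by
  classical
  unfold oddCoverNum
  set σ : Fin t → (Fin n → ZMod 2) := fun i => ∑ x ∈ I i, x with hσdef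
  set A : Finset (Fin t) := Finset.univ.filter (fun i => 2 ≤ (I i).card) with hAdef
  have hIM : ∀ i, I i ⊆ M := fun i x hx => by
    rw [← hunion]; exact Finset.mem_biUnion.mpr ⟨i, Finset.mem_univ i, hx⟩
  have h0I : ∀ i, (0 : Fin n → ZMod 2) ∉ I i := fun i h => hM (hIM i h)
  set D : Fin t → Finset (Fin n → ZMod 2) := fun i => insert (σ i) (I i) with hDdef
  have hDcirc : ∀ i ∈ A, IsCircuit (D i) ∧ ∑ x ∈ D i, x = 0 := by
    intro i hi
    have h2 : 2 ≤ (I i).card := (Finset.mem_filter.mp hi).2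
    exact circuit_of_indep (I i) (h0I i) (hindep i) h2
  set T : Finset (Fin n → ZMod 2) :=
    Finset.fold (β := Finset (Fin n → ZMod 2)) (· ∆ ·) M D A with hTdef
  have hmemT : ∀ x, x ∈ T ↔ ((x ∈ M) ↔ ¬ Odd ((A.filter fun i => x ∈ D i).card)) :=
    fun x => mem_fold_symmDiff M D A x
  have h0T : (0 : Fin n → ZMod 2) ∉ T := by
    rw [hmemT]
    have hfil : A.filter (fun i => (0 : Fin n → ZMod 2) ∈ D i) = ∅ := by
      ext i
      simp only [Finset.mem_filter, Finset.notMem_empty, iff_false, not_and]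
      intro hi h0D
      exact (hDcirc i hi).1.2.1 h0D
    rw [hfil]
    simp [hM]
  have hTsum : ∑ x ∈ T, x = 0 := by
    rw [hTdef, sum_fold_symmDiff, heul]
    rw [Finset.sum_congr rfl (fun i hi => (hDcirc i hi).2)]
    simp
  have hDI : ∀ x, x ∉ A.image σ → ∀ i ∈ A, (x ∈ D i ↔ x ∈ I i) := by
    intro x hn1 i hi
    simp only [hDdef, Finset.mem_insert]
    constructor
    · rintro (rfl | h)
      · exact absurd (Finset.mem_image.mpr ⟨i, hi, rfl⟩) hn1
      · exact h
    · exact Or.inr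
  have hsub : T ⊆ A.image σ ∪ (Finset.univ \ A).biUnion I := by
    intro x hx
    by_contra hnot
    rw [Finset.mem_union] at hnot
    push_neg at hnot
    obtain ⟨hn1, hn2⟩ := hnot
    rw [hmemT] at hx
    by_cases hxM : x ∈ M
    · have hxB : x ∈ Finset.univ.biUnion I := by rw [hunion]; exact hxM
      obtain ⟨i₀, -, hi₀⟩ := Finset.mem_biUnion.mp hxB
      have hi₀A : i₀ ∈ A := by
        by_contra h
        exact hn2 (Finset.mem_biUnion.mpr
          ⟨i₀, Finset.mem_sdiff.mpr ⟨Finset.mem_univ i₀, h⟩, hi₀⟩)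
      have hfil : A.filter (fun i => x ∈ D i) = {i₀} := by
        ext j
        simp only [Finset.mem_filter, Finset.mem_singleton]
        constructor
        · rintro ⟨hjA, hxDj⟩
          have hxIj := (hDI x hn1 j hjA).mp hxDj
          by_contra hne
          exact (Finset.disjoint_left.mp (hdisj j i₀ hne)) hxIj hi₀
        · intro hj
          rw [hj]
          exact ⟨hi₀A, (hDI x hn1 i₀ hi₀A).mpr hi₀⟩
      rw [hfil] at hx
      simp only [Finset.card_singleton] at hx
      have : ¬ Odd 1 := hx.mp hxM
      simp at this
    · have hfil : A.filter (fun i => x ∈ D i) = ∅ := by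
        ext j
        simp only [Finset.mem_filter, Finset.notMem_empty, iff_false, not_and]
        intro hjA hxDj
        exact hxM (hIM j ((hDI x hn1 j hjA).mp hxDj))
      rw [hfil] at hx
      simp only [Finset.card_empty] at hx
      exact hxM (hx.mpr (by simp))
  have hTcard : T.card ≤ t := by
    have h1 := Finset.card_le_card hsub
    have h2 := Finset.card_union_le (A.image σ) ((Finset.univ \ A).biUnion I)
    have h3 : (A.image σ).card ≤ A.card := Finset.card_image_le
    have h4 : ((Finset.univ \ A).biUnion I).card ≤ ∑ i ∈ Finset.univ \ A, (I i).card :=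
      Finset.card_biUnion_le
    have h5 : ∑ i ∈ Finset.univ \ A, (I i).card ≤ (Finset.univ \ A).card * 1 := by
      apply Finset.sum_le_card_nsmul
      intro i hi
      have : i ∉ A := (Finset.mem_sdiff.mp hi).2
      have : ¬ 2 ≤ (I i).card := by
        intro h
        exact this (Finset.mem_filter.mpr ⟨Finset.mem_univ i, h⟩)
      omega
    have h6 : (Finset.univ \ A).card = t - A.card := by
      rw [Finset.card_sdiff_of_subset (Finset.subset_univ A)]
      simp
    have h7 : A.card ≤ t := by
      have := Finset.card_filter_le (Finset.univ : Finset (Fin t)) (fun i => 2 ≤ (I i).card)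
      simpa [hAdef] using this
    omega
  obtain ⟨k, E, hEcirc, hkcard, hEcount⟩ := exists_circuit_decomp T h0T hTsum
  have h3k : 3 * k ≤ t := le_trans hkcard hTcard
  set Cov : (↥A ⊕ Fin k) → Finset (Fin n → ZMod 2) :=
    Sum.elim (fun i => D i.1) E with hCovdef
  have hcov : ∀ x, (Finset.univ.filter fun i : ↥A ⊕ Fin k => x ∈ Cov i).card
      = (A.filter fun i => x ∈ D i).card + (if x ∈ T then 1 else 0) := by
    intro x
    rw [Finset.card_filter, Fintype.sum_sum_type]
    congr 1
    · rw [Finset.card_filter]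
      rw [← Finset.sum_coe_sort A (fun i => if x ∈ D i then (1:ℕ) else 0)]
      rfl
    · rw [← hEcount x, Finset.card_filter]
      rfl
  have hparity : ∀ x, x ∈ M ↔ Odd ((Finset.univ.filter fun i : ↥A ⊕ Fin k => x ∈ Cov i).card) := by
    intro x
    rw [hcov x]
    have hx := hmemT x
    by_cases hxT : x ∈ T
    · rw [if_pos hxT, Nat.odd_add_one]
      exact hx.mp hxT
    · rw [if_neg hxT, add_zero]
      rw [hx] at hxT
      constructor
      · intro h
        by_contra ho
        exact hxT ⟨fun _ => ho, fun _ => h⟩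
      · intro ho
        by_contra hm
        exact hxT ⟨fun h => absurd h hm, fun hno => absurd ho hno⟩
  set N := Fintype.card (↥A ⊕ Fin k) with hNdef
  set e : Fin N ≃ (↥A ⊕ Fin k) := (Fintype.equivFin (↥A ⊕ Fin k)).symm with hedef
  have hcover : (∀ j : Fin N, IsCircuit (Cov (e j))) ∧
      ∀ x, x ∈ M ↔ Odd ((Finset.univ.filter fun j : Fin N => x ∈ Cov (e j)).card) := by
    constructor
    · intro j
      rcases h : e j with i | j'
      · exact (hDcirc i.1 i.2).1
      · exact hEcirc j'
    · intro x
      rw [hparity x]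
      have hcard : (Finset.univ.filter fun j : Fin N => x ∈ Cov (e j)).card
          = (Finset.univ.filter fun i : ↥A ⊕ Fin k => x ∈ Cov i).card := by
        rw [Finset.card_filter, Finset.card_filter]
        exact Equiv.sum_comp e (fun i => if x ∈ Cov i then (1:ℕ) else 0)
      rw [hcard]
  have hmem : N ∈ {s : ℕ | ∃ C : Fin s → Finset (Fin n → ZMod 2), IsOddCover M C} :=
    ⟨fun j => Cov (e j), hcover.1, hcover.2⟩
  have hle := Nat.sInf_le hmem
  have hN : N = A.card + k := by
    simp [hNdef, Fintype.card_sum, Fintype.card_coe]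
  have hAt : A.card ≤ t := by
    have := Finset.card_filter_le (Finset.univ : Finset (Fin t)) (fun i => 2 ≤ (I i).card)
    simpa [hAdef] using this
  refine le_trans (Nat.mul_le_mul_left 3 hle) ?_
  rw [hN]
  calc 3 * (A.card + k) = 3 * A.card + 3 * k := by ring
    _ ≤ 3 * t + t := Nat.add_le_add (Nat.mul_le_mul_left 3 hAt) h3k
    _ = 4 * t := by ring
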